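/- Let Q° be a quiver satisfying α_{a,b} ∈ 2ℤ for all a,b, with tripled quiver Q and W-polytope 𝐖 = (1/2)·Minkowski-sum of [0,β] over all weights β of \overline{R}(d) ⊕ 𝔤(d)_0. Let v ∈ ℤ with gcd(\underline{d}, v) = 1 and let χ ∈ M(d) be a dominant integral weight with χ + ρ − vτ_d ∈ 𝐖. Then χ + ρ − vτ_d does not lie on the boundary of 𝐖. More precisely: if χ + ρ − vτ_d lies on a face of 𝐖 cut out by an antidominant cocharacter λ corresponding to a nontrivial decomposition d = d_1 + ⋯ + d_k (k ≥ 2), then writing vτ_d = ∑_i v_i τ_{d_i} forces each v_i = \underline{d}_i v/\underline{d} to be an integer, contradicting gcd(\underline{d}, v) = 1. -/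

import Mathlib

open Finset

/-- Weight-lattice index set of `T(d)` for a dimension vector partitioned into `k` blocks. -/
abbrev QIdx6 {I : Type} (k : ℕ) (dpart : Fin k → I → ℕ) : Type :=
  (a : I) × (t : Fin k) × Fin (dpart t a)

private lemma sum_qidx6 {I : Type} [Fintype I] {k : ℕ} {dpart : Fin k → I → ℕ}
    {M : Type*} [AddCommMonoid M] (f : QIdx6 k dpart → M) :
    ∑ x : QIdx6 k dpart, f x = ∑ a : I, ∑ t : Fin k, ∑ j : Fin (dpart t a), f ⟨a, t, j⟩ := by
  rw [← Finset.univ_sigma_univ, Finset.sum_sigma]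
  refine Finset.sum_congr rfl fun a _ => ?_
  rw [← Finset.univ_sigma_univ, Finset.sum_sigma]

private lemma even_cast_zmod2 {n : ℤ} (h : Even n) : (n : ZMod 2) = 0 := by
  rcases h with ⟨r, hr⟩
  subst hr
  push_cast
  rw [← two_mul, show (2 : ZMod 2) = 0 by decide, zero_mul]

/-- Lemma on the boundary of the polytope 𝐖: let `Q°` satisfy
`α_{a,b} ∈ 2ℤ` for all `a,b`, with tripled quiver `Q`, let `gcd(\underline{d}, v) = 1`, and let
`χ` be a dominant integral weight with `χ + ρ − vτ_d ∈ 𝐖`. If `χ + ρ − vτ_d` lies on a face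
of `𝐖` cut out by an antidominant cocharacter `λ` (block values `c`) corresponding to a
nontrivial decomposition `d = d₁ + ⋯ + d_k`, `k ≥ 2` — i.e. if one can write
`χ + ρ = −(1/2)R(d)^{λ>0} + ∑ᵢ ψᵢ + v τ_d` with `ψᵢ` supported on the `i`-th block and of
coefficient sum zero — then one gets a contradiction: `χ + ρ − vτ_d` is not on the boundary. -/
theorem stmt6 {I : Type} [Fintype I] [DecidableEq I]
    (E : I → I → ℕ)
    -- Assumption: α_{a,b} = #(a→b) + #(b→a) − 2δ_{ab} is even for all a, b
    (hα : ∀ a b : I, Even ((E a b : ℤ) + E b a - if a = b then 2 else 0))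
    (k : ℕ) (hk : 2 ≤ k)
    (dpart : Fin k → I → ℕ) (hpart : ∀ t, dpart t ≠ 0)
    (c : Fin k → ℤ) (hc : StrictAnti c)
    (v : ℤ)
    -- gcd(\underline{d}, v) = 1
    (hcop : Int.gcd v (Fintype.card (QIdx6 k dpart)) = 1)
    (χ : QIdx6 k dpart → ℤ)
    -- χ is dominant
    (hdom : ∀ (a : I) (p q : (t : Fin k) × Fin (dpart t a)),
      (p.1 < q.1 ∨ (p.1 = q.1 ∧ p.2.val < q.2.val)) → χ ⟨a, p⟩ ≤ χ ⟨a, q⟩)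
    -- ρ, half the sum of the positive roots of 𝔤(d)
    (ρ : QIdx6 k dpart → ℝ)
    (hρ : ∀ x : QIdx6 k dpart, ρ x =
      (((univ.filter (fun y : QIdx6 k dpart => y.1 = x.1 ∧
        (y.2.1 < x.2.1 ∨ (y.2.1 = x.2.1 ∧ y.2.2.val < x.2.2.val)))).card : ℝ))
      - (((univ.filter (fun y : QIdx6 k dpart => y.1 = x.1)).card : ℝ) - 1) / 2)
    -- R(d)^{λ>0} for the tripled quiver Q of Q° (doubled edges plus one loop per vertex)
    (Rpos : QIdx6 k dpart → ℝ)
    (hR : ∀ x : QIdx6 k dpart, Rpos x = ∑ y : QIdx6 k dpart,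
      ((if c y.2.1 < c x.2.1 then
          ((E y.1 x.1 + E x.1 y.1 + if x.1 = y.1 then 1 else 0 : ℕ) : ℝ) else 0)
      - (if c x.2.1 < c y.2.1 then
          ((E x.1 y.1 + E y.1 x.1 + if x.1 = y.1 then 1 else 0 : ℕ) : ℝ) else 0)))
    -- the weights ψᵢ, supported on the i-th block, with ⟨1_{d_i}, ψᵢ⟩ = 0
    (ψ : Fin k → QIdx6 k dpart → ℝ)
    (hψsupp : ∀ (t : Fin k) (x : QIdx6 k dpart), x.2.1 ≠ t → ψ t x = 0)
    (hψ0 : ∀ t : Fin k, ∑ x : QIdx6 k dpart, ψ t x = 0)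
    -- the face decomposition χ + ρ = −(1/2)R(d)^{λ>0} + ∑ᵢ ψᵢ + v τ_d
    (hiden : ∀ x : QIdx6 k dpart, (χ x : ℝ) + ρ x =
      -(1/2) * Rpos x + (∑ t : Fin k, ψ t x)
        + (v : ℝ) / (Fintype.card (QIdx6 k dpart))) :
    False := by
  classical
  have hk0 : 0 < k := by omega
  have hk1 : 1 < k := by omega
  set t0 : Fin k := ⟨0, hk0⟩ with ht0
  set t1 : Fin k := ⟨1, hk1⟩ with ht1
  set N := Fintype.card (QIdx6 k dpart) with hN
  set S : Finset (QIdx6 k dpart) := Finset.univ.filter (fun x => x.2.1 = t0) with hS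
  obtain ⟨a0, ha0⟩ : ∃ a, dpart t0 a ≠ 0 := Function.ne_iff.mp (hpart t0)
  obtain ⟨a1, ha1⟩ : ∃ a, dpart t1 a ≠ 0 := Function.ne_iff.mp (hpart t1)
  have hx0 : (⟨a0, t0, ⟨0, Nat.pos_of_ne_zero ha0⟩⟩ : QIdx6 k dpart) ∈ S := by
    simp [hS]
  have ht01 : t1 ≠ t0 := by
    simp [ht0, ht1, Fin.ext_iff]
  have hx1 : (⟨a1, t1, ⟨0, Nat.pos_of_ne_zero ha1⟩⟩ : QIdx6 k dpart) ∉ S := by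
    simp [hS, ht01]
  have hmpos : 0 < S.card := Finset.card_pos.mpr ⟨_, hx0⟩
  have hmlt : S.card < N := by
    rw [hN, ← Finset.card_univ]
    refine Finset.card_lt_card (Finset.ssubset_univ_iff.mpr ?_)
    intro h
    exact hx1 (h ▸ Finset.mem_univ _)
  have hNpos : 0 < N := lt_trans hmpos hmlt
  -- integer versions
  set RZ : QIdx6 k dpart → ℤ := fun x => ∑ y : QIdx6 k dpart,
      ((if c y.2.1 < c x.2.1 then
          ((E y.1 x.1 + E x.1 y.1 + if x.1 = y.1 then 1 else 0 : ℕ) : ℤ) else 0)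
      - (if c x.2.1 < c y.2.1 then
          ((E x.1 y.1 + E y.1 x.1 + if x.1 = y.1 then 1 else 0 : ℕ) : ℤ) else 0)) with hRZ
  have hRcast : ∀ x, Rpos x = ((RZ x : ℤ) : ℝ) := by
    intro x
    rw [hR x]
    simp only [hRZ]
    push_cast
    rfl
  set px : QIdx6 k dpart → ℤ := fun x =>
    ((Finset.univ.filter (fun y : QIdx6 k dpart => y.1 = x.1 ∧
        (y.2.1 < x.2.1 ∨ (y.2.1 = x.2.1 ∧ y.2.2.val < x.2.2.val)))).card : ℤ) with hpx
  set cx : QIdx6 k dpart → ℤ := fun x =>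
    ((Finset.univ.filter (fun y : QIdx6 k dpart => y.1 = x.1)).card : ℤ) with hcx
  have hρcast : ∀ x, ρ x = ((2 * px x - cx x + 1 + RZ x : ℤ) : ℝ) / 2 - ((RZ x : ℤ) : ℝ) / 2 := by
    intro x
    rw [hρ x]
    simp only [hpx, hcx]
    push_cast
    ring
  set TZ : ℤ := ∑ x ∈ S, (2 * px x - cx x + 1 + RZ x) with hTZ
  -- the ψ sum vanishes on the block
  have hψS : ∑ x ∈ S, (∑ s : Fin k, ψ s x) = 0 := by
    rw [Finset.sum_comm]
    refine Finset.sum_eq_zero (fun s _ => ?_)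
    by_cases hst : s = t0
    · have h1 : ∑ x ∈ S, ψ s x = ∑ x : QIdx6 k dpart, ψ s x := by
        refine Finset.sum_subset (Finset.subset_univ S) (fun x _ hx => hψsupp s x ?_)
        rw [hst]
        simpa [hS] using hx
      rw [h1, hψ0]
    · refine Finset.sum_eq_zero (fun x hx => hψsupp s x ?_)
      have : x.2.1 = t0 := by simpa [hS] using hx
      rw [this]
      exact fun h => hst h.symm
  -- sum the identity over S
  have key : ((∑ x ∈ S, χ x : ℤ) : ℝ) + (TZ : ℝ) / 2 = (S.card : ℝ) * ((v : ℝ) / (N : ℝ)) := by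
    have h3 : ∀ x ∈ S, (χ x : ℝ) + ((2 * px x - cx x + 1 + RZ x : ℤ) : ℝ) / 2 =
        (∑ s : Fin k, ψ s x) + (v : ℝ) / (N : ℝ) := by
      intro x _
      have h := hiden x
      rw [hρcast x, hRcast x] at h
      linarith
    have hχcast : ((∑ x ∈ S, χ x : ℤ) : ℝ) = ∑ x ∈ S, ((χ x : ℤ) : ℝ) := Int.cast_sum _ _
    have hTZcast : (TZ : ℝ) = ∑ x ∈ S, ((2 * px x - cx x + 1 + RZ x : ℤ) : ℝ) := by
      rw [hTZ]
      exact Int.cast_sum _ _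
    rw [hχcast, hTZcast, Finset.sum_div, ← Finset.sum_add_distrib,
      Finset.sum_congr rfl h3, Finset.sum_add_distrib, hψS, zero_add,
      Finset.sum_const, nsmul_eq_mul]
  -- parity facts
  have hEsum : ∀ a b : I, ((E a b : ZMod 2) + (E b a : ZMod 2)) = 0 := by
    intro a b
    have h := hα a b
    have h2 : Even ((E a b : ℤ) + E b a) := by
      have hd : Even (if a = b then (2:ℤ) else 0) := by
        by_cases hab : a = b <;> simp [hab]
      have h' := h.add hd
      simpa using h'
    have h3 := even_cast_zmod2 h2
    push_cast at h3
    exact h3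
  have hsq : ∀ z : ZMod 2, z * z = z := by decide
  have hneg : ∀ z : ZMod 2, -z = z := by decide
  have htwo : (2 : ZMod 2) = 0 := by decide
  -- TZ is even
  have hEvenT : Even TZ := by
    have hcast : ((TZ : ZMod 2) = 0) := by
      have hTZcast2 : (TZ : ZMod 2) =
          ∑ x ∈ S, ((2 * px x - cx x + 1 + RZ x : ℤ) : ZMod 2) := by
        rw [hTZ]
        exact Int.cast_sum _ _
      have hterm : ∀ x ∈ S, ((2 * px x - cx x + 1 + RZ x : ℤ) : ZMod 2)
          = 1 + ((Finset.univ.filter (fun y : QIdx6 k dpart =>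
              y.1 = x.1 ∧ y.2.1 = t0)).card : ZMod 2) := by
        intro x hxS
        have hxt : x.2.1 = t0 := by simpa [hS] using hxS
        have hkey : ((cx x : ℤ) : ZMod 2) + ((RZ x : ℤ) : ZMod 2) =
            ((Finset.univ.filter (fun y : QIdx6 k dpart =>
              y.1 = x.1 ∧ y.2.1 = t0)).card : ZMod 2) := by
          have hRZ2 : ((RZ x : ℤ) : ZMod 2) = ∑ y : QIdx6 k dpart,
              (((if c y.2.1 < c x.2.1 then
                  ((E y.1 x.1 : ZMod 2) + (E x.1 y.1 : ZMod 2) + if x.1 = y.1 then 1 else 0) else 0)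
              - (if c x.2.1 < c y.2.1 then
                  ((E x.1 y.1 : ZMod 2) + (E y.1 x.1 : ZMod 2) + if x.1 = y.1 then 1 else 0) else 0))) := by
            simp only [hRZ]
            push_cast
            rfl
          have hcx2 : ((cx x : ℤ) : ZMod 2) = ∑ y : QIdx6 k dpart,
              (if y.1 = x.1 then (1 : ZMod 2) else 0) := by
            simp only [hcx]
            rw [Finset.card_filter]
            push_cast
            rfl
          have hD : ((Finset.univ.filter (fun y : QIdx6 k dpart =>
                y.1 = x.1 ∧ y.2.1 = t0)).card : ZMod 2) = ∑ y : QIdx6 k dpart,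
              (if y.1 = x.1 ∧ y.2.1 = t0 then (1 : ZMod 2) else 0) := by
            rw [Finset.card_filter]
            push_cast
            rfl
          rw [hRZ2, hcx2, hD, ← Finset.sum_add_distrib]
          refine Finset.sum_congr rfl (fun y _ => ?_)
          by_cases hyt : y.2.1 = t0
          · have hcc : c y.2.1 = c x.2.1 := by rw [hyt, hxt]
            simp [hyt, hxt]
          · have hne : y.2.1 ≠ x.2.1 := fun h => hyt (h.trans hxt)
            have hccne : c y.2.1 ≠ c x.2.1 := fun h => hne (hc.injective h)
            have hdelta : ((E y.1 x.1 : ZMod 2) + (E x.1 y.1 : ZMod 2) + if x.1 = y.1 then (1:ZMod 2) else 0)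
                = if x.1 = y.1 then (1 : ZMod 2) else 0 := by
              rw [hEsum y.1 x.1, zero_add]
            have hdelta' : ((E x.1 y.1 : ZMod 2) + (E y.1 x.1 : ZMod 2) + if x.1 = y.1 then (1:ZMod 2) else 0)
                = if x.1 = y.1 then (1 : ZMod 2) else 0 := by
              rw [hEsum x.1 y.1, zero_add]
            have hRHS : (if y.1 = x.1 ∧ y.2.1 = t0 then (1:ZMod 2) else 0) = 0 := by
              simp [hyt]
            rw [hRHS]
            rcases lt_trichotomy (c y.2.1) (c x.2.1) with hlt | heq | hgt
            · rw [if_pos hlt, if_neg (fun h => absurd (lt_trans hlt h) (lt_irrefl _)),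
                hdelta, sub_zero]
              by_cases hxy : x.1 = y.1
              · rw [if_pos hxy, if_pos hxy.symm, ← two_mul, mul_one, htwo]
              · rw [if_neg hxy, if_neg (fun h => hxy h.symm), add_zero]
            · exact absurd heq hccne
            · rw [if_neg (fun h => absurd (lt_trans hgt h) (lt_irrefl _)),
                if_pos hgt, hdelta', zero_sub, hneg]
              by_cases hxy : x.1 = y.1
              · rw [if_pos hxy, if_pos hxy.symm, ← two_mul, mul_one, htwo]
              · rw [if_neg hxy, if_neg (fun h => hxy h.symm), add_zero]
        -- now conclude the per-x identity
        push_cast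
        push_cast at hkey
        calc 2 * ((px x : ℤ) : ZMod 2) - ((cx x : ℤ) : ZMod 2) + 1 + ((RZ x : ℤ) : ZMod 2)
            = 1 + (((cx x : ℤ) : ZMod 2) + ((RZ x : ℤ) : ZMod 2)) + 2 * (((px x : ℤ) : ZMod 2) - ((cx x : ℤ) : ZMod 2)) := by
              ring
          _ = 1 + ((Finset.univ.filter (fun y : QIdx6 k dpart =>
                y.1 = x.1 ∧ y.2.1 = t0)).card : ZMod 2) := by
              rw [hkey, htwo, zero_mul, add_zero]
      rw [hTZcast2, Finset.sum_congr rfl hterm]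
      -- compute the remaining sum over the sigma type
      have hDval : ∀ a : I, (Finset.univ.filter (fun y : QIdx6 k dpart =>
            y.1 = a ∧ y.2.1 = t0)).card = dpart t0 a := by
        intro a
        rw [Finset.card_filter,
          sum_qidx6 (fun y : QIdx6 k dpart => if y.1 = a ∧ y.2.1 = t0 then 1 else 0)]
        have h1 : ∀ (a' : I) (s : Fin k),
            (∑ _j : Fin (dpart s a'), if a' = a ∧ s = t0 then 1 else 0)
            = if a' = a ∧ s = t0 then dpart s a' else 0 := by
          intro a' s
          rw [Finset.sum_const]
          split <;> simp
        simp only [h1, ite_and]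
        rw [Finset.sum_eq_single a]
        · simp [apply_ite Finset.card, Finset.sum_ite_eq', Finset.card_univ]
        · intro b _ hb
          simp [hb]
        · simp
      rw [sum_filter,
        sum_qidx6 (fun x : QIdx6 k dpart => if x.2.1 = t0 then
          (1 + ((Finset.univ.filter (fun y : QIdx6 k dpart =>
              y.1 = x.1 ∧ y.2.1 = t0)).card : ZMod 2)) else 0)]
      refine Finset.sum_eq_zero (fun a _ => ?_)
      dsimp only
      rw [Finset.sum_eq_single t0]
      · simp only [eq_self_iff_true, if_true]
        simp only [Finset.sum_const, nsmul_eq_mul, hDval a,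
          Finset.card_univ, Fintype.card_fin]
        generalize ((dpart t0 a : ℕ) : ZMod 2) = z
        revert z
        decide
      · intro b _ hb
        simp [hb]
      · simp
    have hdvd := (ZMod.intCast_zmod_eq_zero_iff_dvd TZ 2).mp hcast
    rcases hdvd with ⟨r, hr⟩
    exact ⟨r, by omega⟩
  -- conclude
  rcases hEvenT with ⟨r, hr⟩
  have key2 : ((∑ x ∈ S, χ x : ℤ) : ℝ) + (r : ℝ) = (S.card : ℝ) * ((v : ℝ) / (N : ℝ)) := by
    rw [← key, hr]
    push_cast
    ring
  have hNne : (N : ℝ) ≠ 0 := Nat.cast_ne_zero.mpr hNpos.ne'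
  have key4 : (N : ℤ) * ((∑ x ∈ S, χ x) + r) = v * S.card := by
    have key3 : (((N : ℤ) * ((∑ x ∈ S, χ x) + r) : ℤ) : ℝ) = ((v * S.card : ℤ) : ℝ) := by
      push_cast
      field_simp at key2
      push_cast at key2
      linarith
    exact_mod_cast key3
  have hdvd : (N : ℤ) ∣ v * S.card := ⟨_, key4.symm⟩
  have hdvdN : N ∣ v.natAbs * S.card := by
    have h := Int.natAbs_dvd_natAbs.mpr hdvd
    simpa [Int.natAbs_mul] using h
  have hco : Nat.Coprime N v.natAbs := by
    have h : Nat.gcd v.natAbs N = 1 := by simpa [Int.gcd] using hcop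
    exact Nat.coprime_comm.mp h
  have hdvdm : N ∣ S.card := (Nat.Coprime.dvd_mul_left hco).mp hdvdN
  have hle : N ≤ S.card := Nat.le_of_dvd hmpos hdvdm
  omega
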